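/- Let C = {x ∈ Q^n | A x ≤ 0} be a pointed polyhedral cone and let r, r' be two distinct (non-proportional) extreme rays of C. Then r and r' span a 2-dimensional face of C (i.e., they are adjacent) if and only if rank(A_{ζ(r) ∩ ζ(r')}) = n − 2. -/

import Mathlib

open Matrix

/-- The minimal face of the cone `{x | A x ≤ 0}` containing the ray `r`. -/
def minimalFace {m n : ℕ} (A : Matrix (Fin m) (Fin n) ℚ) (r : Fin n → ℚ) :
    Set (Fin n → ℚ) :=
  {x | A.mulVec x ≤ 0 ∧ ∀ i, A.mulVec r i = 0 → A.mulVec x i = 0}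

/-- `r` is an extreme ray of the cone `{x | A x ≤ 0}`: it is a nonzero
element of the cone whose minimal face is one-dimensional. -/
def IsExtremeRay {m n : ℕ} (A : Matrix (Fin m) (Fin n) ℚ) (r : Fin n → ℚ) : Prop :=
  r ≠ 0 ∧ A.mulVec r ≤ 0 ∧
    Module.finrank ℚ (Submodule.span ℚ (minimalFace A r)) = 1

/-- Adjacency test: two non-proportional extreme rays `r, r'` of the pointed
cone `{x | A x ≤ 0}` span a two-dimensional face iff the submatrix of rows
indexed by `ζ(r) ∩ ζ(r')` has rank `n − 2`. -/
theorem adjacency_test (m n : ℕ) (A : Matrix (Fin m) (Fin n) ℚ)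
    (hpointed : A.rank = n) (r r' : Fin n → ℚ)
    (hr : IsExtremeRay A r) (hr' : IsExtremeRay A r')
    (hnp : ∀ lam : ℚ, r' ≠ lam • r) :
    (∃ I : Set (Fin m),
        r ∈ {x | A.mulVec x ≤ 0 ∧ ∀ i ∈ I, A.mulVec x i = 0} ∧
        r' ∈ {x | A.mulVec x ≤ 0 ∧ ∀ i ∈ I, A.mulVec x i = 0} ∧
        Module.finrank ℚ (Submodule.span ℚ
          {x | A.mulVec x ≤ 0 ∧ ∀ i ∈ I, A.mulVec x i = 0}) = 2) ↔
      (A.submatrix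
        (fun i : {i : Fin m // A.mulVec r i = 0 ∧ A.mulVec r' i = 0} => (i : Fin m))
        id).rank = n - 2 := by
  classical
  set B := A.submatrix
      (fun i : {i : Fin m // A.mulVec r i = 0 ∧ A.mulVec r' i = 0} => (i : Fin m)) id with hBdef
  -- linear independence of r, r'
  have hli : LinearIndependent ℚ ![r', r] := by
    rw [linearIndependent_fin2]
    refine ⟨?_, ?_⟩
    · simpa using hr.1
    · intro a h
      exact hnp a (by simpa using h.symm)
  -- span of {r, r'} has dimension 2
  have hrange : Set.range ![r', r] = ({r', r} : Set (Fin n → ℚ)) := by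
    ext x
    simp only [Set.mem_range, Fin.exists_fin_two, Set.mem_insert_iff, Set.mem_singleton_iff]
    constructor
    · rintro (h | h) <;> simp_all
    · rintro (rfl | rfl)
      · exact Or.inl (by simp)
      · exact Or.inr (by simp)
  have hspan2 : Module.finrank ℚ (Submodule.span ℚ ({r, r'} : Set (Fin n → ℚ))) = 2 := by
    rw [Set.pair_comm r r', ← hrange, finrank_span_eq_card hli]
    simp
  -- kernel membership characterization
  have hkerB : ∀ x : Fin n → ℚ, x ∈ LinearMap.ker B.mulVecLin ↔
      ∀ i, A.mulVec r i = 0 → A.mulVec r' i = 0 → A.mulVec x i = 0 := by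
    intro x
    constructor
    · intro h i h1 h2
      have := congrFun (show B.mulVec x = 0 from h) ⟨i, h1, h2⟩
      simpa [hBdef, Matrix.mulVec, Matrix.submatrix_apply, dotProduct, Matrix.mulVecLin_apply] using this
    · intro h
      funext i
      show B.mulVec x i = 0
      have := h i.1 i.2.1 i.2.2
      exact this
  have hrrK : Submodule.span ℚ ({r, r'} : Set (Fin n → ℚ)) ≤ LinearMap.ker B.mulVecLin := by
    rw [Submodule.span_le]
    rintro x (rfl | rfl)
    · exact (hkerB _).mpr fun i h1 _ => h1
    · exact (hkerB _).mpr fun i _ h2 => h2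
  -- rank-nullity
  have hrn : B.rank + Module.finrank ℚ (LinearMap.ker B.mulVecLin) = n := by
    have := LinearMap.finrank_range_add_finrank_ker B.mulVecLin
    rwa [Module.finrank_pi, Fintype.card_fin] at this
  have hker_ge : 2 ≤ Module.finrank ℚ (LinearMap.ker B.mulVecLin) := by
    have := Submodule.finrank_mono hrrK
    omega
  have hker_le : Module.finrank ℚ (LinearMap.ker B.mulVecLin) ≤ n := by
    have := Submodule.finrank_le (LinearMap.ker B.mulVecLin)
    rwa [Module.finrank_pi, Fintype.card_fin] at this
  constructor
  · rintro ⟨I, ⟨hrC, hrI⟩, ⟨hr'C, hr'I⟩, hdim⟩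
    -- the face set
    set F : Set (Fin n → ℚ) := {x | A.mulVec x ≤ 0 ∧ ∀ i ∈ I, A.mulVec x i = 0} with hF
    have hrrF : Submodule.span ℚ ({r, r'} : Set (Fin n → ℚ)) ≤ Submodule.span ℚ F := by
      rw [Submodule.span_le]
      rintro x (rfl | rfl)
      · exact Submodule.subset_span ⟨hrC, hrI⟩
      · exact Submodule.subset_span ⟨hr'C, hr'I⟩
    have hFeq : Submodule.span ℚ ({r, r'} : Set (Fin n → ℚ)) = Submodule.span ℚ F :=
      Submodule.eq_of_le_of_finrank_le hrrF (by rw [hdim, hspan2])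
    -- show the kernel is contained in span {r, r'}
    have hKle : LinearMap.ker B.mulVecLin ≤ Submodule.span ℚ ({r, r'} : Set (Fin n → ℚ)) := by
      intro x hx
      have hx' := (hkerB x).mp hx
      -- choose ε
      set f : Fin m → ℚ := fun i =>
        if A.mulVec r i = 0 ∧ A.mulVec r' i = 0 then 1
        else (-(A.mulVec r i + A.mulVec r' i)) / (|A.mulVec x i| + 1) with hf
      set s : Finset ℚ := insert 1 (Finset.univ.image f) with hs
      have hsne : s.Nonempty := ⟨1, Finset.mem_insert_self _ _⟩
      set ε := s.min' hsne with hε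
      have hfpos : ∀ i, 0 < f i := by
        intro i
        rw [hf]
        by_cases h : A.mulVec r i = 0 ∧ A.mulVec r' i = 0
        · simp [h]
        · have h1 : A.mulVec r i ≤ 0 := hr.2.1 i
          have h2 : A.mulVec r' i ≤ 0 := hr'.2.1 i
          have hlt : A.mulVec r i + A.mulVec r' i < 0 := by
            rcases not_and_or.mp h with h' | h'
            · exact add_neg_of_neg_of_nonpos (lt_of_le_of_ne h1 h') h2
            · exact add_neg_of_nonpos_of_neg h1 (lt_of_le_of_ne h2 h')
          simp only [h, if_false]
          apply div_pos (by linarith)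
          positivity
      have hεpos : 0 < ε := by
        have hmem := s.min'_mem hsne
        rcases Finset.mem_insert.mp hmem with h | h
        · rw [hε, h]; norm_num
        · obtain ⟨i, -, hi⟩ := Finset.mem_image.mp h
          rw [hε, ← hi]
          exact hfpos i
      have hεle : ∀ i, ε ≤ f i := fun i =>
        Finset.min'_le _ _ (Finset.mem_insert_of_mem (Finset.mem_image_of_mem f (Finset.mem_univ i)))
      -- the perturbed point lies in F
      have hpt : r + r' + ε • x ∈ F := by
        have hval : ∀ i, A.mulVec (r + r' + ε • x) i
            = A.mulVec r i + A.mulVec r' i + ε * A.mulVec x i := by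
          intro i
          simp [Matrix.mulVec_add, Matrix.mulVec_smul, smul_eq_mul]
        constructor
        · intro i
          rw [hval i]
          by_cases h : A.mulVec r i = 0 ∧ A.mulVec r' i = 0
          · rw [h.1, h.2, hx' i h.1 h.2]
            simp
          · have hle1 : ε * A.mulVec x i ≤ ε * (|A.mulVec x i| + 1) := by
              have : A.mulVec x i ≤ |A.mulVec x i| + 1 := by
                have := le_abs_self (A.mulVec x i); linarith
              exact mul_le_mul_of_nonneg_left this hεpos.le
            have hle2 : ε * (|A.mulVec x i| + 1) ≤ f i * (|A.mulVec x i| + 1) := by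
              apply mul_le_mul_of_nonneg_right (hεle i)
              positivity
            have hfi : f i * (|A.mulVec x i| + 1) = -(A.mulVec r i + A.mulVec r' i) := by
              rw [hf]
              simp only [h, if_false]
              field_simp
            simp only [Pi.zero_apply]
            linarith [hle1.trans (hle2.trans_eq hfi)]
        · intro i hi
          rw [hval i]
          have h1 := hrI i hi
          have h2 := hr'I i hi
          rw [h1, h2, hx' i h1 h2]
          ring
      -- conclude x ∈ span {r, r'}
      have hmem : r + r' + ε • x ∈ Submodule.span ℚ ({r, r'} : Set (Fin n → ℚ)) := by
        rw [hFeq]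
        exact Submodule.subset_span hpt
      have hrmem : r ∈ Submodule.span ℚ ({r, r'} : Set (Fin n → ℚ)) :=
        Submodule.subset_span (Set.mem_insert _ _)
      have hr'mem : r' ∈ Submodule.span ℚ ({r, r'} : Set (Fin n → ℚ)) :=
        Submodule.subset_span (Set.mem_insert_of_mem _ rfl)
      have hsm : ε • x ∈ Submodule.span ℚ ({r, r'} : Set (Fin n → ℚ)) := by
        have : r + r' + ε • x - r - r' = ε • x := by abel
        rw [← this]
        exact Submodule.sub_mem _ (Submodule.sub_mem _ hmem hrmem) hr'mem
      have := Submodule.smul_mem _ ε⁻¹ hsm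
      rwa [smul_smul, inv_mul_cancel₀ hεpos.ne', one_smul] at this
    have hKeq : LinearMap.ker B.mulVecLin = Submodule.span ℚ ({r, r'} : Set (Fin n → ℚ)) :=
      le_antisymm hKle hrrK
    have : Module.finrank ℚ (LinearMap.ker B.mulVecLin) = 2 := by rw [hKeq, hspan2]
    omega
  · intro hrank
    have hker2 : Module.finrank ℚ (LinearMap.ker B.mulVecLin) = 2 := by omega
    have hKeq : Submodule.span ℚ ({r, r'} : Set (Fin n → ℚ)) = LinearMap.ker B.mulVecLin :=
      Submodule.eq_of_le_of_finrank_le hrrK (by rw [hker2, hspan2])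
    refine ⟨{i | A.mulVec r i = 0 ∧ A.mulVec r' i = 0},
      ⟨hr.2.1, fun i hi => hi.1⟩, ⟨hr'.2.1, fun i hi => hi.2⟩, ?_⟩
    set F : Set (Fin n → ℚ) :=
      {x | A.mulVec x ≤ 0 ∧ ∀ i ∈ {i | A.mulVec r i = 0 ∧ A.mulVec r' i = 0},
        A.mulVec x i = 0} with hF
    have h1 : Submodule.span ℚ ({r, r'} : Set (Fin n → ℚ)) ≤ Submodule.span ℚ F := by
      rw [Submodule.span_le]
      rintro x (rfl | rfl)
      · exact Submodule.subset_span ⟨hr.2.1, fun i hi => hi.1⟩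
      · exact Submodule.subset_span ⟨hr'.2.1, fun i hi => hi.2⟩
    have h2 : Submodule.span ℚ F ≤ Submodule.span ℚ ({r, r'} : Set (Fin n → ℚ)) := by
      rw [hKeq, Submodule.span_le]
      intro x hx
      exact (hkerB x).mpr fun i hi1 hi2 => hx.2 i ⟨hi1, hi2⟩
    have : Submodule.span ℚ F = Submodule.span ℚ ({r, r'} : Set (Fin n → ℚ)) :=
      le_antisymm h2 h1
    rw [this, hspan2]
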